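/- Let X be an infinite compact metric space, 𝒱 a Hermitian line bundle, α : X → X a homeomorphism, and ℰ = Γ(𝒱,α). For any α-invariant Borel probability measure μ on X, the state τ_μ∘Φ on O(ℰ), where τ_μ(f) = ∫_X f dμ and Φ is the canonical gauge-invariant conditional expectation onto C(X), is a tracial state. In particular T(O(ℰ)) ≠ ∅. -/

import Mathlib

/-!
STATEMENT 9. Let `X` be an infinite compact metric space, `𝒱` a Hermitian line bundle,
`α : X → X` a homeomorphism, and `ℰ = Γ(𝒱,α)`.  The Cuntz–Pimsner algebra `B = O(ℰ)`
is modelled abstractly: a unital C*-algebra with an embedding `π` of `C(X)` as the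
fixed point algebra of the gauge action, spectral subspaces `E_n` (with `E_n·E_m ⊆
E_{n+m}`, `E_n* = E_{-n}`, `⊕_n E_n` dense), the twisted commutation relation
`π(f)·a = a·π(f∘αⁿ)` for `a ∈ E_n`, the line-bundle identity `a*a = π(f)`,
`aa* = π(f∘α^{-n})` for `a ∈ E_n`, and the gauge conditional expectation `Φ` onto
`C(X)`.  For any `α`-invariant Borel probability measure `μ` on `X`, the functional
`τ_μ ∘ Φ`, `b ↦ ∫_X Φ(b) dμ`, is a tracial state on `O(ℰ)`.  In particular
`T(O(ℰ)) ≠ ∅`.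
-/

open MeasureTheory
open scoped ComplexOrder

/-- ℤ-iterates of a homeomorphism, as continuous maps. -/
noncomputable def cpow {X : Type*} [TopologicalSpace X] (α : X ≃ₜ X) (n : ℤ) : C(X, X) :=
  if 0 ≤ n then ⟨(⇑α)^[n.toNat], α.continuous.iterate _⟩
  else ⟨(⇑α.symm)^[(-n).toNat], α.symm.continuous.iterate _⟩

/-- An abstract model of the Cuntz–Pimsner algebra `O(Γ(𝒱,α))` of a line bundle `𝒱`
twisted by a homeomorphism `α`, together with its gauge grading and the gauge
conditional expectation onto `C(X)`. -/
structure CPLineSystem (X : Type*) [TopologicalSpace X] [CompactSpace X] (α : X ≃ₜ X)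
    (B : Type*) [NormedRing B] [StarRing B] [CStarRing B] [NormedAlgebra ℂ B]
    [CompleteSpace B] where
  /-- the canonical copy of `C(X)` inside `O(ℰ)` -/
  π : C(X, ℂ) →⋆ₐ[ℂ] B
  π_injective : Function.Injective π
  /-- the spectral subspaces `E_n` of the gauge action -/
  Esub : ℤ → Submodule ℂ B
  mem_E0 : ∀ b, b ∈ Esub 0 ↔ ∃ f, π f = b
  Esub_mul : ∀ m n a b, a ∈ Esub m → b ∈ Esub n → a * b ∈ Esub (m + n)
  Esub_star : ∀ n a, a ∈ Esub n → star a ∈ Esub (-n)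
  /-- the algebraic direct sum `⊕_n E_n` is dense -/
  dense_graded : Dense ((⨆ n : ℤ, Esub n : Submodule ℂ B) : Set B)
  /-- `f·ξ = ξ·(f∘αⁿ)` for `ξ ∈ E_n` -/
  twist : ∀ (n : ℤ) (a : B), a ∈ Esub n → ∀ f : C(X, ℂ),
    π f * a = a * π (f.comp (cpow α n))
  /-- for `ξ ∈ E_n`, `ξ*ξ = π(⟨ξ,ξ⟩_R)` and `ξξ* = π(⟨ξ,ξ⟩_R ∘ α^{-n})` (line bundle) -/
  switch : ∀ (n : ℤ) (a : B), a ∈ Esub n → ∃ f : C(X, ℂ),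
    star a * a = π f ∧ a * star a = π (f.comp (cpow α (-n)))
  /-- the gauge conditional expectation, with values in `C(X)` -/
  ΦC : B →ₗ[ℂ] C(X, ℂ)
  ΦC_π : ∀ f, ΦC (π f) = f
  ΦC_graded : ∀ (n : ℤ) (a : B), a ∈ Esub n → n ≠ 0 → ΦC a = 0
  ΦC_contraction : ∀ b, ‖ΦC b‖ ≤ ‖b‖
  ΦC_faithful : ∀ b, ΦC (star b * b) = 0 → b = 0

section Aux
variable {X : Type*} [MetricSpace X] [CompactSpace X] {α : X ≃ₜ X}
    {B : Type*} [NormedRing B] [StarRing B] [CStarRing B] [NormedAlgebra ℂ B] [CompleteSpace B]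

theorem CPLineSystem.starModule (S : CPLineSystem X α B) : StarModule ℂ B := by
  refine ⟨fun c b => ?_⟩
  have h1 : (algebraMap ℂ B) c = S.π ((algebraMap ℂ C(X, ℂ)) c) := (S.π.commutes c).symm
  have h2 : star ((algebraMap ℂ C(X, ℂ)) c) = (algebraMap ℂ C(X, ℂ)) (star c) :=
    (algebraMap_star_comm c).symm
  calc star (c • b) = star ((algebraMap ℂ B) c * b) := by rw [Algebra.smul_def]
    _ = star b * star ((algebraMap ℂ B) c) := star_mul _ _
    _ = star b * (algebraMap ℂ B) (star c) := by
          rw [h1, ← map_star S.π, h2, ← (S.π.commutes (star c))]; rfl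
    _ = (algebraMap ℂ B) (star c) * star b := (Algebra.commutes _ _).symm
    _ = star c • star b := (Algebra.smul_def _ _).symm

noncomputable def CPLineSystem.cstarAlgebra (S : CPLineSystem X α B) : CStarAlgebra B :=
  letI := S.starModule
  { toNormedRing := inferInstance, toStarRing := inferInstance,
    toCompleteSpace := inferInstance, toCStarRing := inferInstance,
    toNormedAlgebra := inferInstance, toStarModule := inferInstance }

theorem CPLineSystem.nonneg_of_pi_eq (S : CPLineSystem X α B) {f : C(X, ℂ)} {ξ : B}
    (h : S.π f = star ξ * ξ) (x : X) : 0 ≤ f x := by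
  letI := S.starModule
  letI : CStarAlgebra B := S.cstarAlgebra
  have hsa : star f = f := S.π_injective (by rw [map_star, h, star_mul, star_star])
  have him : ∀ y, (f y).im = 0 := by
    intro y
    have hy : star (f y) = f y := by
      have := congrArg (fun u : C(X, ℂ) => u y) hsa
      simpa using this
    exact Complex.conj_eq_iff_im.mp hy
  rw [Complex.le_def]
  refine ⟨?_, by simp [him x]⟩
  simp only [Complex.zero_re]
  by_contra hneg
  push_neg at hneg
  classical
  set U : Set X := {y | (f y).re < (f x).re / 2} with hU
  have hUopen : IsOpen U := isOpen_lt (Complex.continuous_re.comp f.continuous) continuous_const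
  have hxU : x ∈ U := by simp only [hU, Set.mem_setOf_eq]; linarith
  obtain ⟨g, hg0, hg1, hg01⟩ := exists_continuous_zero_one_of_isClosed
    hUopen.isClosed_compl (isClosed_singleton (x := x))
    (Set.disjoint_left.mpr fun y hy hyx => by
      rw [Set.mem_singleton_iff] at hyx; exact hy (hyx ▸ hxU))
  have hnn : ∀ y, 0 ≤ -(f y).re * (g y) ^ 2 := by
    intro y
    rcases eq_or_ne (g y) 0 with hz | hz
    · simp [hz]
    · have hyU : y ∈ U := by
        by_contra hyU
        exact hz (by simpa using hg0 hyU)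
      have h1 : (f y).re < 0 := by
        have := hyU; simp only [hU, Set.mem_setOf_eq] at this; linarith
      exact mul_nonneg (by linarith) (sq_nonneg _)
  have hrcont : Continuous fun y => Real.sqrt (-(f y).re * (g y) ^ 2) :=
    Real.continuous_sqrt.comp
      (((Complex.continuous_re.comp f.continuous).neg).mul (g.continuous.pow 2))
  set r : X → ℝ := fun y => Real.sqrt (-(f y).re * (g y) ^ 2) with hr
  set R : C(X, ℂ) := ⟨fun y => ((r y : ℝ) : ℂ), Complex.continuous_ofReal.comp hrcont⟩ with hR
  set G : C(X, ℂ) := ⟨fun y => ((g y : ℝ) : ℂ), Complex.continuous_ofReal.comp g.continuous⟩ with hG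
  have keyfun : f * (G * G) = -(star R * R) := by
    ext y
    have h1 : f y = ((f y).re : ℂ) := by apply Complex.ext <;> simp [him y]
    have h2 : (r y) * (r y) = -(f y).re * (g y) ^ 2 := Real.mul_self_sqrt (hnn y)
    simp only [ContinuousMap.mul_apply, ContinuousMap.neg_apply, ContinuousMap.star_apply,
      hR, hG, ContinuousMap.coe_mk]
    rw [h1, Complex.star_def, Complex.conj_ofReal,
      show ((r y : ℝ) : ℂ) * ((r y : ℝ) : ℂ) = (((r y) * (r y) : ℝ) : ℂ) from by push_cast; ring,
      h2]
    push_cast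
    ring
  have cG : star G = G := by
    ext y
    simp [hG, Complex.star_def, Complex.conj_ofReal]
  set η := ξ * S.π G with hη
  have hηη : star η * η = S.π (f * (G * G)) := by
    calc star (ξ * S.π G) * (ξ * S.π G)
        = star (S.π G) * ((star ξ * ξ) * S.π G) := by rw [star_mul]; simp [mul_assoc]
      _ = S.π (star G) * (S.π f * S.π G) := by rw [← h, map_star]
      _ = S.π (star G * (f * G)) := by rw [← map_mul, ← map_mul]
      _ = S.π (f * (G * G)) := by rw [cG]; exact congrArg S.π (by ring)
  have hsum : star (S.π R) * S.π R = -(star η * η) := by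
    calc star (S.π R) * S.π R = S.π (star R * R) := by rw [← map_star, ← map_mul]
      _ = -(S.π (-(star R * R))) := by rw [map_neg, neg_neg]
      _ = -(S.π (f * (G * G))) := by rw [← keyfun]
      _ = -(star η * η) := by rw [hηη]
  set q := star (S.π R) * S.π R with hq
  have hqsa : IsSelfAdjoint q := IsSelfAdjoint.star_mul_self _
  have hspec : ∀ z ∈ spectrum ℂ q, z = 0 := by
    intro z hz
    have hzre : z = (z.re : ℂ) := hqsa.mem_spectrum_eq_re hz
    have hmemR : z.re ∈ spectrum ℝ q := by
      refine (spectrum.algebraMap_mem_iff ℂ).mp ?_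
      rw [show (algebraMap ℝ ℂ) z.re = ((z.re : ℝ) : ℂ) from rfl]
      exact hzre ▸ hz
    have h1 : 0 ≤ z.re := spectrum_star_mul_self_nonneg z.re hmemR
    have h2 : z.re ≤ 0 := by
      have hmem' : z.re ∈ spectrum ℝ (-(star η * η)) := hsum ▸ hmemR
      rw [← spectrum.neg_eq] at hmem'
      have := spectrum_star_mul_self_nonneg (-z.re) (Set.mem_neg.mp hmem')
      linarith
    rw [hzre, le_antisymm h2 h1]
    simp
  have hrad : spectralRadius ℂ q = 0 := by
    refine le_antisymm ?_ zero_le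
    rw [spectralRadius]
    exact iSup₂_le fun z hz => by simp [hspec z hz]
  have hq0 : q = 0 := by
    have h3 : spectralRadius ℂ q = (‖q‖₊ : ENNReal) := hqsa.spectralRadius_eq_nnnorm
    rw [hrad] at h3
    have h4 : ‖q‖₊ = 0 := by exact_mod_cast h3.symm
    exact nnnorm_eq_zero.mp h4
  have hπR : S.π R = 0 := (CStarRing.star_mul_self_eq_zero_iff _).mp hq0
  have hR0 : R = 0 := S.π_injective (by rw [hπR, map_zero])
  have hRx : R x = 0 := by rw [hR0]; rfl
  have hrx : r x = 0 := by
    have : ((r x : ℝ) : ℂ) = 0 := hRx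
    exact_mod_cast this
  have hgx : g x = 1 := by simpa using hg1 (Set.mem_singleton x)
  have hpos : 0 < -(f x).re * (g x) ^ 2 := by rw [hgx]; simp; linarith
  have := Real.sqrt_pos.mpr hpos
  rw [hr] at hrx
  simp only at hrx
  linarith [hrx ▸ this]

end Aux

theorem statement9
    (X : Type*) [MetricSpace X] [CompactSpace X] [Infinite X]
    [MeasurableSpace X] [BorelSpace X]
    (α : X ≃ₜ X)
    (B : Type*) [NormedRing B] [StarRing B] [CStarRing B] [NormedAlgebra ℂ B]
    [CompleteSpace B]
    (S : CPLineSystem X α B)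
    -- μ is an α-invariant Borel probability measure on X
    (μ : Measure X) [IsProbabilityMeasure μ]
    (hinv : Measure.map (⇑α) μ = μ) :
    -- τ_μ ∘ Φ is a tracial state on O(ℰ); in particular T(O(ℰ)) ≠ ∅
    ∃ τ : B →ₗ[ℂ] ℂ,
      (∀ b : B, τ b = ∫ x, S.ΦC b x ∂μ) ∧
      τ 1 = 1 ∧
      (∀ a : B, 0 ≤ τ (star a * a)) ∧
      (∀ a b : B, τ (a * b) = τ (b * a)) := by
  classical
  letI := S.starModule
  -- integrability of continuous functions
  have hint : ∀ φ : C(X, ℂ), Integrable (fun x => φ x) μ := fun φ =>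
    φ.continuous.integrable_of_hasCompactSupport (IsClosed.isCompact (isClosed_tsupport _))
  -- the functional
  let τ : B →ₗ[ℂ] ℂ :=
    { toFun := fun b => ∫ x, S.ΦC b x ∂μ
      map_add' := by
        intro a b
        simp only [map_add, ContinuousMap.add_apply]
        exact integral_add (hint _) (hint _)
      map_smul' := by
        intro c a
        simp only [_root_.map_smul, ContinuousMap.smul_apply, RingHom.id_apply]
        exact integral_smul c _ }
  have hτdef : ∀ b : B, τ b = ∫ x, S.ΦC b x ∂μ := fun b => rfl
  -- boundedness and continuity
  have hτbound : ∀ b, ‖τ b‖ ≤ ‖b‖ := by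
    intro b
    calc ‖τ b‖ ≤ ‖S.ΦC b‖ * (μ Set.univ).toReal :=
          norm_integral_le_of_norm_le_const
            (Filter.Eventually.of_forall fun x => (S.ΦC b).norm_coe_le_norm x)
      _ = ‖S.ΦC b‖ := by simp [measure_univ]
      _ ≤ ‖b‖ := S.ΦC_contraction b
  have hτcont : Continuous fun b : B => τ b :=
    (τ.mkContinuous 1 fun b => by simpa using hτbound b).continuous
  -- τ on the image of π
  have hτπ : ∀ φ : C(X, ℂ), τ (S.π φ) = ∫ x, φ x ∂μ := by
    intro φ
    rw [hτdef, S.ΦC_π]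
  have hτ0 : ∀ b : B, S.ΦC b = 0 → τ b = 0 := by
    intro b hb
    rw [hτdef, hb]
    simp
  -- invariance of μ under all integer iterates
  have hα : Measurable ⇑α := α.continuous.measurable
  have hαs : Measurable ⇑α.symm := α.symm.continuous.measurable
  have hiter : ∀ k : ℕ, Measure.map ((⇑α)^[k]) μ = μ := by
    intro k
    induction k with
    | zero => simp [Measure.map_id]
    | succ k ih =>
      rw [Function.iterate_succ, ← Measure.map_map (α.continuous.iterate k).measurable hα,
        hinv, ih]
  have hsymm : Measure.map (⇑α.symm) μ = μ := by
    have h1 : Measure.map (⇑α.symm) (Measure.map (⇑α) μ) = μ := by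
      rw [Measure.map_map hαs hα,
        show (⇑α.symm) ∘ (⇑α) = id from funext fun x => α.symm_apply_apply x, Measure.map_id]
    rwa [hinv] at h1
  have hiter' : ∀ k : ℕ, Measure.map ((⇑α.symm)^[k]) μ = μ := by
    intro k
    induction k with
    | zero => simp [Measure.map_id]
    | succ k ih =>
      rw [Function.iterate_succ, ← Measure.map_map (α.symm.continuous.iterate k).measurable hαs,
        hsymm, ih]
  have hmap : ∀ n : ℤ, Measure.map (⇑(cpow α n)) μ = μ := by
    intro n
    by_cases hn : 0 ≤ n
    · unfold cpow
      rw [if_pos hn, ContinuousMap.coe_mk]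
      exact hiter _
    · unfold cpow
      rw [if_neg hn, ContinuousMap.coe_mk]
      exact hiter' _
  have hinv' : ∀ (φ : C(X, ℂ)) (n : ℤ), ∫ x, φ (cpow α n x) ∂μ = ∫ x, φ x ∂μ := by
    intro φ n
    conv_rhs => rw [← hmap n]
    rw [integral_map (cpow α n).continuous.measurable.aemeasurable
      φ.continuous.aestronglyMeasurable]
  -- τ is unital
  have hτ1 : τ 1 = 1 := by
    rw [show (1 : B) = S.π 1 from (map_one S.π).symm, hτπ]
    simp [measure_univ]
  -- trace relation on diagonals
  have h6 : ∀ (n : ℤ) (d : B), d ∈ S.Esub n → τ (d * star d) = τ (star d * d) := by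
    intro n d hd
    obtain ⟨φ, hφ1, hφ2⟩ := S.switch n d hd
    rw [hφ1, hφ2, hτπ, hτπ]
    simpa only [ContinuousMap.comp_apply] using hinv' φ (-n)
  -- polarization step
  have hF : ∀ (m : ℤ) (a c : B), a ∈ S.Esub m → c ∈ S.Esub m →
      τ (a * star c) = τ (star c * a) := by
    intro m a c ha hc
    have expand1 : ∀ u v : B, τ ((u + v) * star (u + v)) =
        τ (u * star u) + τ (u * star v) + τ (v * star u) + τ (v * star v) := by
      intro u v
      simp only [star_add, add_mul, mul_add, map_add]
      ring
    have expand2 : ∀ u v : B, τ (star (u + v) * (u + v)) =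
        τ (star u * u) + τ (star u * v) + τ (star v * u) + τ (star v * v) := by
      intro u v
      simp only [star_add, add_mul, mul_add, map_add]
      ring
    have hIc : (Complex.I • c) ∈ S.Esub m := Submodule.smul_mem _ _ hc
    have e1 := h6 m (a + c) (Submodule.add_mem _ ha hc)
    have e2 := h6 m (a + Complex.I • c) (Submodule.add_mem _ ha hIc)
    have ea := h6 m a ha
    have ec := h6 m c hc
    rw [expand1, expand2] at e1 e2
    have sm1 : τ (a * star (Complex.I • c)) = -Complex.I * τ (a * star c) := by
      rw [star_smul, mul_smul_comm, _root_.map_smul]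
      simp [Complex.star_def, Complex.conj_I, smul_eq_mul]
    have sm2 : τ ((Complex.I • c) * star a) = Complex.I * τ (c * star a) := by
      rw [smul_mul_assoc, _root_.map_smul]
      simp [smul_eq_mul]
    have sm3 : τ ((Complex.I • c) * star (Complex.I • c)) = τ (c * star c) := by
      rw [star_smul, smul_mul_assoc, mul_smul_comm, smul_smul, _root_.map_smul]
      simp [Complex.star_def, Complex.conj_I, mul_neg, Complex.I_mul_I, smul_eq_mul]
    have sm4 : τ (star (Complex.I • c) * a) = -Complex.I * τ (star c * a) := by
      rw [star_smul, smul_mul_assoc, _root_.map_smul]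
      simp [Complex.star_def, Complex.conj_I, smul_eq_mul]
    have sm5 : τ (star a * (Complex.I • c)) = Complex.I * τ (star a * c) := by
      rw [mul_smul_comm, _root_.map_smul]
      simp [smul_eq_mul]
    have sm6 : τ (star (Complex.I • c) * (Complex.I • c)) = τ (star c * c) := by
      rw [star_smul, smul_mul_assoc, mul_smul_comm, smul_smul, _root_.map_smul]
      simp [Complex.star_def, Complex.conj_I, mul_neg, Complex.I_mul_I, smul_eq_mul]
    rw [sm1, sm2, sm3, sm4, sm5, sm6] at e2
    have hI : (Complex.I : ℂ) ^ 2 = -1 := Complex.I_sq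
    linear_combination (1 / 2 : ℂ) * e1 + (Complex.I / 2) * e2
      - ((1 + Complex.I) / 2) * ea - ((1 + Complex.I) / 2) * ec
      + ((1 / 2 : ℂ) * (τ (a * star c) + τ (star a * c) - τ (star c * a) - τ (c * star a))) * hI
  -- trace relation on homogeneous elements
  have hA : ∀ (m n : ℤ) (a b : B), a ∈ S.Esub m → b ∈ S.Esub n →
      τ (a * b) = τ (b * a) := by
    intro m n a b ha hb
    by_cases hmn : m + n = 0
    · have hsb : star b ∈ S.Esub m := by
        have := S.Esub_star n b hb
        rwa [show -n = m by omega] at this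
      calc τ (a * b) = τ (a * star (star b)) := by rw [star_star]
        _ = τ (star (star b) * a) := hF m a (star b) ha hsb
        _ = τ (b * a) := by rw [star_star]
    · have h1 : S.ΦC (a * b) = 0 :=
        S.ΦC_graded (m + n) _ (S.Esub_mul m n a b ha hb) hmn
      have h2 : S.ΦC (b * a) = 0 :=
        S.ΦC_graded (n + m) _ (S.Esub_mul n m b a hb ha) (by omega)
      rw [hτ0 _ h1, hτ0 _ h2]
  -- trace relation on the graded part
  have hB : ∀ a ∈ (⨆ n : ℤ, S.Esub n), ∀ b ∈ (⨆ n : ℤ, S.Esub n),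
      τ (a * b) = τ (b * a) := by
    intro a ha
    refine Submodule.iSup_induction (motive := fun a : B => ∀ b ∈ (⨆ n : ℤ, S.Esub n),
      τ (a * b) = τ (b * a)) S.Esub ha ?_ ?_ ?_
    · intro m a' ha' b hb
      refine Submodule.iSup_induction (motive := fun b : B => τ (a' * b) = τ (b * a'))
        S.Esub hb ?_ ?_ ?_
      · intro n b' hb'
        exact hA m n a' b' ha' hb'
      · simp
      · intro x y hx hy
        rw [mul_add, add_mul, map_add, map_add, hx, hy]
    · intro b hb
      simp
    · intro x y hx hy b hb
      rw [add_mul, mul_add, map_add, map_add, hx b hb, hy b hb]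
  -- extend trace relation by density
  have hdense := S.dense_graded
  have htrace : ∀ a b : B, τ (a * b) = τ (b * a) := by
    have step1 : ∀ b ∈ (⨆ n : ℤ, S.Esub n), ∀ a : B, τ (a * b) = τ (b * a) := by
      intro b hb
      have hfg : (fun a : B => τ (a * b)) = fun a : B => τ (b * a) := by
        refine Continuous.ext_on hdense ?_ ?_ ?_
        · exact hτcont.comp (continuous_id.mul continuous_const)
        · exact hτcont.comp (continuous_const.mul continuous_id)
        · intro a ha
          exact hB a ha b hb
      exact fun a => congrFun hfg a
    intro a b
    have hfg : (fun b : B => τ (a * b)) = fun b : B => τ (b * a) := by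
      refine Continuous.ext_on hdense ?_ ?_ ?_
      · exact hτcont.comp (continuous_const.mul continuous_id)
      · exact hτcont.comp (continuous_id.mul continuous_const)
      · intro b hb
        exact step1 b hb a
    exact congrFun hfg b
  -- positivity on the graded part
  have hposD : ∀ a ∈ (⨆ n : ℤ, S.Esub n), 0 ≤ τ (star a * a) := by
    intro a ha
    obtain ⟨v, hv, hsum⟩ := (Submodule.mem_iSup_iff_exists_finsupp S.Esub a).mp ha
    have hsum' : a = ∑ i ∈ v.support, v i := by
      rw [← hsum, Finsupp.sum]
    rw [hsum', star_sum, Finset.sum_mul_sum, map_sum]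
    apply Finset.sum_nonneg
    intro i hi
    rw [map_sum, Finset.sum_eq_single_of_mem i hi (fun j hj hne => by
      exact hτ0 _ (S.ΦC_graded (-i + j) _
        (S.Esub_mul (-i) j _ _ (S.Esub_star i _ (hv i)) (hv j)) (by omega)))]
    obtain ⟨φ, hφ, -⟩ := S.switch i (v i) (hv i)
    rw [hφ, hτπ]
    have hφpos : ∀ x, 0 ≤ φ x := fun x => S.nonneg_of_pi_eq hφ.symm x
    have him : ∀ x, (φ x).im = 0 := fun x => ((Complex.le_def.mp (hφpos x)).2).symm.trans rfl
    have hre : ∀ x, 0 ≤ (φ x).re := by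
      intro x
      have := (Complex.le_def.mp (hφpos x)).1
      simpa using this
    have hfn : (fun x => φ x) = fun x => (((φ x).re : ℝ) : ℂ) :=
      funext fun x => by apply Complex.ext <;> simp [him x]
    rw [hfn]
    have h1 : ∫ x, (((φ x).re : ℝ) : ℂ) ∂μ = ((∫ x, (φ x).re ∂μ : ℝ) : ℂ) := by
      simpa using integral_ofReal (𝕜 := ℂ) (f := fun x => (φ x).re) (μ := μ)
    rw [h1, Complex.zero_le_real]
    exact integral_nonneg hre
  -- positivity by density
  have hclosed : IsClosed {a : B | 0 ≤ τ (star a * a)} := by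
    have hc : Continuous fun a : B => τ (star a * a) :=
      hτcont.comp (continuous_star.mul continuous_id)
    have hset : {a : B | 0 ≤ τ (star a * a)} =
        (fun a : B => τ (star a * a)) ⁻¹' {z : ℂ | 0 ≤ z} := rfl
    rw [hset]
    apply IsClosed.preimage hc
    have hz : {z : ℂ | 0 ≤ z} = Complex.re ⁻¹' (Set.Ici 0) ∩ Complex.im ⁻¹' {0} := by
      ext z
      simp [Complex.le_def, eq_comm]
    rw [hz]
    exact (isClosed_Ici.preimage Complex.continuous_re).inter
      (isClosed_singleton.preimage Complex.continuous_im)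
  have hpos : ∀ a : B, 0 ≤ τ (star a * a) := by
    intro a
    exact hclosed.closure_subset_iff.mpr (fun x hx => hposD x hx) (hdense a)
  exact ⟨τ, hτdef, hτ1, hpos, htrace⟩
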